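/- Cut-set converse bound for classical erasure-prone storage with shared-randomness assistance: for any feasible scheme for CS-SRA(N,K,N_B,K_B) with uniform message Y₀ of size κλ₀ (in q-ary units), storage nodes Y₁,…,Y_N each of size κ, and SR nodes B₁,…,B_{N_B} each of size κλ_B, satisfying the decodability constraint H(Y₀ | Y_𝒦, B_{𝒦_B}) = 0 for all 𝒦 of size K and 𝒦_B of size K_B, and the security constraint I(Y₀; Y_{𝒦ᶜ}, B_{𝒦_Bᶜ}) = 0, it holds that λ₀ ≤ max(2K−N, 0) + λ_B · max(2K_B − N_B, 0). -/

import Mathlib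

open scoped Classical in
/-- Probability that the random variable `X` takes value `s`, under the (finite) probability
mass function `p` on the sample space `Ω`. -/
noncomputable def pmfOf {Ω S : Type*} [Fintype Ω] (p : Ω → ℝ) (X : Ω → S) (s : S) : ℝ :=
  ∑ ω : Ω, if X ω = s then p ω else 0

/-- Shannon entropy (in nats) of the random variable `X` under `p`. -/
noncomputable def Hent {Ω S : Type*} [Fintype Ω] [Fintype S] (p : Ω → ℝ) (X : Ω → S) : ℝ :=
  -∑ s : S, pmfOf p X s * Real.log (pmfOf p X s)

/-- Conditional entropy `H(X | Z)`. -/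
noncomputable def condH {Ω S U : Type*} [Fintype Ω] [Fintype S] [Fintype U]
    (p : Ω → ℝ) (X : Ω → S) (Z : Ω → U) : ℝ :=
  Hent p (fun ω => (X ω, Z ω)) - Hent p Z

/-- Mutual information `I(X ; Y)`. -/
noncomputable def MI {Ω S T : Type*} [Fintype Ω] [Fintype S] [Fintype T]
    (p : Ω → ℝ) (X : Ω → S) (Y : Ω → T) : ℝ :=
  Hent p X + Hent p Y - Hent p (fun ω => (X ω, Y ω))

/-- Conditional mutual information `I(X ; Y | Z)`. -/
noncomputable def CMI {Ω S T U : Type*} [Fintype Ω] [Fintype S] [Fintype T] [Fintype U]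
    (p : Ω → ℝ) (X : Ω → S) (Y : Ω → T) (Z : Ω → U) : ℝ :=
  Hent p (fun ω => (X ω, Z ω)) + Hent p (fun ω => (Y ω, Z ω))
    - Hent p (fun ω => (X ω, Y ω, Z ω)) - Hent p Z


section IT
open scoped Classical
variable {Ω S T U A : Type*} [Fintype Ω] (p : Ω → ℝ)

lemma pmf_nonneg (hp0 : ∀ ω, 0 ≤ p ω) (X : Ω → S) (s : S) : 0 ≤ pmfOf p X s := by
  apply Finset.sum_nonneg; intro ω _; split <;> simp [hp0 ω]

lemma pmf_sum [Fintype S] (X : Ω → S) : ∑ s, pmfOf p X s = ∑ ω, p ω := by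
  simp only [pmfOf]
  rw [Finset.sum_comm]
  refine Finset.sum_congr rfl fun ω _ => ?_
  simp

lemma pmf_fst_marginal [Fintype T] (X : Ω → S) (Z : Ω → T) (s : S) :
    ∑ t, pmfOf p (fun ω => (X ω, Z ω)) (s, t) = pmfOf p X s := by
  simp only [pmfOf]
  rw [Finset.sum_comm]
  refine Finset.sum_congr rfl fun ω _ => ?_
  by_cases h : X ω = s <;> simp [Prod.ext_iff, h]

lemma pmf_snd_marginal [Fintype S] (X : Ω → S) (Z : Ω → T) (t : T) :
    ∑ s, pmfOf p (fun ω => (X ω, Z ω)) (s, t) = pmfOf p Z t := by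
  simp only [pmfOf]
  rw [Finset.sum_comm]
  refine Finset.sum_congr rfl fun ω _ => ?_
  by_cases h : Z ω = t <;> simp [Prod.ext_iff, h]

lemma pmf_le_marginal (hp0 : ∀ ω, 0 ≤ p ω) (X : Ω → S) (Z : Ω → T) (s : S) (t : T) :
    pmfOf p (fun ω => (X ω, Z ω)) (s, t) ≤ pmfOf p X s := by
  apply Finset.sum_le_sum; intro ω _
  by_cases h : X ω = s
  · by_cases h2 : Z ω = t <;> simp [Prod.ext_iff, h, h2, hp0 ω]
  · simp [Prod.ext_iff, h, hp0 ω]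


lemma pmf_pair_comp (f : S → T) (X : Ω → S) (s : S) (t : T) :
    pmfOf p (fun ω => (X ω, f (X ω))) (s, t) = if f s = t then pmfOf p X s else 0 := by
  simp only [pmfOf]
  by_cases h : f s = t
  · simp only [h, if_true]
    refine Finset.sum_congr rfl fun ω _ => ?_
    by_cases hx : X ω = s <;> simp [Prod.ext_iff, hx, h]
  · simp only [h, if_false]
    refine Finset.sum_eq_zero fun ω _ => ?_
    by_cases hx : X ω = s <;> simp [Prod.ext_iff, hx, h]

lemma pmf_comp_pair (f : S → T) (X : Ω → S) (s : S) (t : T) :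
    pmfOf p (fun ω => (f (X ω), X ω)) (t, s) = if f s = t then pmfOf p X s else 0 := by
  simp only [pmfOf]
  by_cases h : f s = t
  · simp only [h, if_true]
    refine Finset.sum_congr rfl fun ω _ => ?_
    by_cases hx : X ω = s <;> simp [Prod.ext_iff, hx, h]
  · simp only [h, if_false]
    refine Finset.sum_eq_zero fun ω _ => ?_
    by_cases hx : X ω = s <;> simp [Prod.ext_iff, hx, h]

lemma Hent_pair_comp [Fintype S] [Fintype T] (f : S → T) (X : Ω → S) :
    Hent p (fun ω => (X ω, f (X ω))) = Hent p X := by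
  simp only [Hent]
  congr 1
  rw [Fintype.sum_prod_type]
  refine Finset.sum_congr rfl fun s _ => ?_
  have key : ∀ t, pmfOf p (fun ω => (X ω, f (X ω))) (s, t)
      * Real.log (pmfOf p (fun ω => (X ω, f (X ω))) (s, t))
      = if f s = t then pmfOf p X s * Real.log (pmfOf p X s) else 0 := by
    intro t; rw [pmf_pair_comp]; split <;> simp
  rw [Finset.sum_congr rfl fun t _ => key t]
  simp

lemma Hent_comp_pair [Fintype S] [Fintype T] (f : S → T) (X : Ω → S) :
    Hent p (fun ω => (f (X ω), X ω)) = Hent p X := by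
  simp only [Hent]
  congr 1
  rw [Fintype.sum_prod_type]
  rw [Finset.sum_comm]
  refine Finset.sum_congr rfl fun s _ => ?_
  have key : ∀ t, pmfOf p (fun ω => (f (X ω), X ω)) (t, s)
      * Real.log (pmfOf p (fun ω => (f (X ω), X ω)) (t, s))
      = if f s = t then pmfOf p X s * Real.log (pmfOf p X s) else 0 := by
    intro t; rw [pmf_comp_pair]; split <;> simp
  rw [Finset.sum_congr rfl fun t _ => key t]
  simp

lemma Hent_congr [Fintype S] [Fintype T] (X : Ω → S) (X' : Ω → T)
    (f : S → T) (g : T → S) (h1 : ∀ ω, X' ω = f (X ω)) (h2 : ∀ ω, X ω = g (X' ω)) :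
    Hent p X = Hent p X' := by
  have e1 : (fun ω => (X ω, X' ω)) = fun ω => (X ω, f (X ω)) :=
    funext fun ω => by rw [h1]
  have e2 : (fun ω => (X ω, X' ω)) = fun ω => (g (X' ω), X' ω) :=
    funext fun ω => by rw [← h2]
  have := Hent_pair_comp p f X
  rw [← e1] at this
  rw [← this]
  conv_lhs => rw [e2]
  rw [Hent_comp_pair]


-- marginals of the triple
lemma pmf3_m_y [Fintype T] (X : Ω → S) (Y : Ω → T) (Z : Ω → U) (x : S) (z : U) :
    ∑ y, pmfOf p (fun ω => (X ω, Y ω, Z ω)) (x, y, z) = pmfOf p (fun ω => (X ω, Z ω)) (x, z) := by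
  simp only [pmfOf]
  rw [Finset.sum_comm]
  refine Finset.sum_congr rfl fun ω _ => ?_
  by_cases h1 : X ω = x <;> by_cases h2 : Z ω = z <;> simp [Prod.ext_iff, h1, h2]

lemma pmf3_m_x [Fintype S] (X : Ω → S) (Y : Ω → T) (Z : Ω → U) (y : T) (z : U) :
    ∑ x, pmfOf p (fun ω => (X ω, Y ω, Z ω)) (x, y, z) = pmfOf p (fun ω => (Y ω, Z ω)) (y, z) := by
  simp only [pmfOf]
  rw [Finset.sum_comm]
  refine Finset.sum_congr rfl fun ω _ => ?_
  by_cases h1 : Y ω = y <;> by_cases h2 : Z ω = z <;> simp [Prod.ext_iff, h1, h2]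

lemma pmf3_le_xz (hp0 : ∀ ω, 0 ≤ p ω) (X : Ω → S) (Y : Ω → T) (Z : Ω → U) (x : S) (y : T) (z : U) :
    pmfOf p (fun ω => (X ω, Y ω, Z ω)) (x, y, z) ≤ pmfOf p (fun ω => (X ω, Z ω)) (x, z) := by
  apply Finset.sum_le_sum; intro ω _
  by_cases h1 : X ω = x <;> by_cases h2 : Y ω = y <;> by_cases h3 : Z ω = z <;>
    simp [Prod.ext_iff, h1, h2, h3, hp0 ω]

lemma pmf3_le_yz (hp0 : ∀ ω, 0 ≤ p ω) (X : Ω → S) (Y : Ω → T) (Z : Ω → U) (x : S) (y : T) (z : U) :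
    pmfOf p (fun ω => (X ω, Y ω, Z ω)) (x, y, z) ≤ pmfOf p (fun ω => (Y ω, Z ω)) (y, z) := by
  apply Finset.sum_le_sum; intro ω _
  by_cases h1 : X ω = x <;> by_cases h2 : Y ω = y <;> by_cases h3 : Z ω = z <;>
    simp [Prod.ext_iff, h1, h2, h3, hp0 ω]

lemma pmf3_le_z (hp0 : ∀ ω, 0 ≤ p ω) (X : Ω → S) (Y : Ω → T) (Z : Ω → U) (x : S) (y : T) (z : U) :
    pmfOf p (fun ω => (X ω, Y ω, Z ω)) (x, y, z) ≤ pmfOf p Z z := by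
  apply Finset.sum_le_sum; intro ω _
  by_cases h1 : X ω = x <;> by_cases h2 : Y ω = y <;> by_cases h3 : Z ω = z <;>
    simp [Prod.ext_iff, h1, h2, h3, hp0 ω]

lemma CMI_nonneg [Fintype S] [Fintype T] [Fintype U]
    (hp0 : ∀ ω, 0 ≤ p ω) (hp1 : ∑ ω, p ω = 1)
    (X : Ω → S) (Y : Ω → T) (Z : Ω → U) : 0 ≤ CMI p X Y Z := by
  set a : S → T → U → ℝ := fun x y z => pmfOf p (fun ω => (X ω, Y ω, Z ω)) (x, y, z) with ha
  set pXZ : S → U → ℝ := fun x z => pmfOf p (fun ω => (X ω, Z ω)) (x, z) with hxz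
  set pYZ : T → U → ℝ := fun y z => pmfOf p (fun ω => (Y ω, Z ω)) (y, z) with hyz
  set pZ : U → ℝ := fun z => pmfOf p Z z with hz
  have ha0 : ∀ x y z, 0 ≤ a x y z := fun x y z => pmf_nonneg p hp0 _ _
  have hxz0 : ∀ x z, 0 ≤ pXZ x z := fun x z => pmf_nonneg p hp0 _ _
  have hyz0 : ∀ y z, 0 ≤ pYZ y z := fun y z => pmf_nonneg p hp0 _ _
  have hz0 : ∀ z, 0 ≤ pZ z := fun z => pmf_nonneg p hp0 _ _
  have m_y : ∀ x z, ∑ y, a x y z = pXZ x z := fun x z => pmf3_m_y p X Y Z x z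
  have m_x : ∀ y z, ∑ x, a x y z = pYZ y z := fun y z => pmf3_m_x p X Y Z y z
  have m_zx : ∀ z, ∑ x, pXZ x z = pZ z := fun z => pmf_snd_marginal p X Z z
  have m_zy : ∀ z, ∑ y, pYZ y z = pZ z := fun z => pmf_snd_marginal p Y Z z
  have le_xz := pmf3_le_xz p hp0 X Y Z
  have le_yz := pmf3_le_yz p hp0 X Y Z
  have le_z := pmf3_le_z p hp0 X Y Z
  -- entropies as triple sums
  have e_a : Hent p (fun ω => (X ω, Y ω, Z ω))
      = -∑ x, ∑ y, ∑ z, a x y z * Real.log (a x y z) := by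
    simp only [Hent, Fintype.sum_prod_type, ha]
  have e_xz : Hent p (fun ω => (X ω, Z ω))
      = -∑ x, ∑ y, ∑ z, a x y z * Real.log (pXZ x z) := by
    have aux : ∑ x, ∑ y, ∑ z, a x y z * Real.log (pXZ x z)
        = ∑ x, ∑ z, pXZ x z * Real.log (pXZ x z) := by
      refine Finset.sum_congr rfl fun x _ => ?_
      rw [Finset.sum_comm]
      refine Finset.sum_congr rfl fun z _ => ?_
      rw [← Finset.sum_mul, m_y x z]
    simp only [Hent, Fintype.sum_prod_type]
    rw [aux]
  have e_yz : Hent p (fun ω => (Y ω, Z ω))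
      = -∑ x, ∑ y, ∑ z, a x y z * Real.log (pYZ y z) := by
    have aux : ∑ x, ∑ y, ∑ z, a x y z * Real.log (pYZ y z)
        = ∑ y, ∑ z, pYZ y z * Real.log (pYZ y z) := by
      rw [Finset.sum_comm]
      refine Finset.sum_congr rfl fun y _ => ?_
      rw [Finset.sum_comm]
      refine Finset.sum_congr rfl fun z _ => ?_
      rw [← Finset.sum_mul, m_x y z]
    simp only [Hent, Fintype.sum_prod_type]
    rw [aux]
  have e_z : Hent p Z = -∑ x, ∑ y, ∑ z, a x y z * Real.log (pZ z) := by
    have aux : ∑ x, ∑ y, ∑ z, a x y z * Real.log (pZ z)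
        = ∑ z, pZ z * Real.log (pZ z) := by
      have step1 : ∀ x : S, ∑ y, ∑ z, a x y z * Real.log (pZ z)
          = ∑ z, (∑ y, a x y z) * Real.log (pZ z) := by
        intro x
        rw [Finset.sum_comm]
        exact Finset.sum_congr rfl fun z _ => (Finset.sum_mul _ _ _).symm
      rw [Finset.sum_congr rfl fun x _ => step1 x, Finset.sum_comm]
      refine Finset.sum_congr rfl fun z _ => ?_
      rw [← Finset.sum_mul, Finset.sum_congr rfl fun x _ => m_y x z, m_zx z]
    simp only [Hent]
    rw [aux]
  have key : CMI p X Y Z = ∑ x, ∑ y, ∑ z,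
      (a x y z * Real.log (a x y z) + a x y z * Real.log (pZ z)
        - a x y z * Real.log (pXZ x z) - a x y z * Real.log (pYZ y z)) := by
    simp only [CMI, e_a, e_xz, e_yz, e_z, Finset.sum_sub_distrib, Finset.sum_add_distrib]
    ring
  -- pointwise bound
  set u : S → T → U → ℝ := fun x y z => pXZ x z * pYZ y z / pZ z with hu
  have hu0 : ∀ x y z, 0 ≤ u x y z := fun x y z =>
    div_nonneg (mul_nonneg (hxz0 x z) (hyz0 y z)) (hz0 z)
  have hpt : ∀ x y z, a x y z - u x y z
      ≤ a x y z * Real.log (a x y z) + a x y z * Real.log (pZ z)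
        - a x y z * Real.log (pXZ x z) - a x y z * Real.log (pYZ y z) := by
    intro x y z
    rcases eq_or_lt_of_le (ha0 x y z) with h | h
    · simp [← h]
      exact hu0 x y z
    · have hXZ : 0 < pXZ x z := lt_of_lt_of_le h (le_xz x y z)
      have hYZ : 0 < pYZ y z := lt_of_lt_of_le h (le_yz x y z)
      have hZ : 0 < pZ z := lt_of_lt_of_le h (le_z x y z)
      have hupos : 0 < u x y z := div_pos (mul_pos hXZ hYZ) hZ
      have hlogu : Real.log (u x y z) = Real.log (pXZ x z) + Real.log (pYZ y z) - Real.log (pZ z) := by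
        rw [hu]
        rw [Real.log_div (mul_pos hXZ hYZ).ne' hZ.ne', Real.log_mul hXZ.ne' hYZ.ne']
      have hlog := Real.log_le_sub_one_of_pos (div_pos hupos h)
      rw [Real.log_div hupos.ne' h.ne'] at hlog
      have hmul := mul_le_mul_of_nonneg_left hlog h.le
      have : a x y z * (u x y z / a x y z - 1) = u x y z - a x y z := by
        field_simp
      rw [this] at hmul
      nlinarith [hmul, hlogu]
  have sum_a : ∑ x, ∑ y, ∑ z, a x y z = 1 := by
    have := pmf_sum p (fun ω => (X ω, Y ω, Z ω))
    rw [hp1] at this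
    simpa [Fintype.sum_prod_type] using this
  have sum_u : ∑ x, ∑ y, ∑ z, u x y z = 1 := by
    have reord : ∑ x, ∑ y, ∑ z, u x y z = ∑ z, ∑ x, ∑ y, u x y z :=
      calc ∑ x, ∑ y, ∑ z, u x y z
          = ∑ x, ∑ z, ∑ y, u x y z :=
            Finset.sum_congr rfl fun x _ => Finset.sum_comm
        _ = ∑ z, ∑ x, ∑ y, u x y z := Finset.sum_comm
    rw [reord]
    have : ∀ z, ∑ x, ∑ y, u x y z = pZ z := by
      intro z
      have : ∑ x, ∑ y, u x y z = (∑ x, pXZ x z) * (∑ y, pYZ y z) / pZ z := by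
        rw [Finset.sum_mul, Finset.sum_div]
        refine Finset.sum_congr rfl fun x _ => ?_
        rw [Finset.mul_sum, Finset.sum_div]
      rw [this, m_zx z, m_zy z]
      by_cases hzz : pZ z = 0
      · simp [hzz]
      · field_simp
    rw [Finset.sum_congr rfl fun z _ => this z]
    have := pmf_sum p Z
    rw [hp1] at this
    exact this
  rw [key]
  have big : ∑ x, ∑ y, ∑ z, (a x y z - u x y z) ≤ ∑ x, ∑ y, ∑ z,
      (a x y z * Real.log (a x y z) + a x y z * Real.log (pZ z)
        - a x y z * Real.log (pXZ x z) - a x y z * Real.log (pYZ y z)) := by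
    refine Finset.sum_le_sum fun x _ => Finset.sum_le_sum fun y _ => Finset.sum_le_sum fun z _ => hpt x y z
  have : ∑ x, ∑ y, ∑ z, (a x y z - u x y z) = 0 := by
    simp only [Finset.sum_sub_distrib]
    rw [sum_a, sum_u]; ring
  linarith


lemma Hent_snd_le_pair [Fintype S] [Fintype T]
    (hp0 : ∀ ω, 0 ≤ p ω) (hp1 : ∑ ω, p ω = 1) (A : Ω → S) (B : Ω → T) :
    Hent p B ≤ Hent p (fun ω => (A ω, B ω)) := by
  have h := CMI_nonneg p hp0 hp1 A A B
  have e : Hent p (fun ω => (A ω, A ω, B ω)) = Hent p (fun ω => (A ω, B ω)) :=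
    Hent_comp_pair p Prod.fst (fun ω => (A ω, B ω))
  simp only [CMI, e] at h
  linarith

lemma Hent_pair_swap [Fintype S] [Fintype T] (A : Ω → S) (B : Ω → T) :
    Hent p (fun ω => (A ω, B ω)) = Hent p (fun ω => (B ω, A ω)) :=
  Hent_congr p _ _ Prod.swap Prod.swap (fun ω => rfl) (fun ω => rfl)

lemma Hent_fst_le_pair [Fintype S] [Fintype T]
    (hp0 : ∀ ω, 0 ≤ p ω) (hp1 : ∑ ω, p ω = 1) (A : Ω → S) (B : Ω → T) :
    Hent p A ≤ Hent p (fun ω => (A ω, B ω)) := by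
  rw [Hent_pair_swap]
  exact Hent_snd_le_pair p hp0 hp1 B A

lemma Hent_comp_le [Fintype S] [Fintype T]
    (hp0 : ∀ ω, 0 ≤ p ω) (hp1 : ∑ ω, p ω = 1) (f : S → T) (X : Ω → S) :
    Hent p (fun ω => f (X ω)) ≤ Hent p X := by
  have h := Hent_snd_le_pair p hp0 hp1 X (fun ω => f (X ω))
  rwa [Hent_pair_comp] at h

lemma Hent_const_unit (hp1 : ∑ ω, p ω = 1) :
    Hent p (fun _ : Ω => ()) = 0 := by
  simp [Hent, pmfOf, hp1]

lemma Hent_pair_le_add [Fintype S] [Fintype T]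
    (hp0 : ∀ ω, 0 ≤ p ω) (hp1 : ∑ ω, p ω = 1) (A : Ω → S) (B : Ω → T) :
    Hent p (fun ω => (A ω, B ω)) ≤ Hent p A + Hent p B := by
  have h := CMI_nonneg p hp0 hp1 A B (fun _ => ())
  have e1 : Hent p (fun ω => (A ω, ())) = Hent p A := Hent_pair_comp p (fun _ => ()) A
  have e2 : Hent p (fun ω => (B ω, ())) = Hent p B := Hent_pair_comp p (fun _ => ()) B
  have e3 : Hent p (fun ω => (A ω, B ω, ())) = Hent p (fun ω => (A ω, B ω)) :=
    Hent_congr p _ _ (fun v => (v.1, v.2.1)) (fun v => (v.1, v.2, ()))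
      (fun ω => rfl) (fun ω => rfl)
  simp only [CMI, e1, e2, e3, Hent_const_unit p hp1] at h
  linarith

lemma Hent_tuple_le {ι : Type*} [Fintype ι] [Fintype A]
    (hp0 : ∀ ω, 0 ≤ p ω) (hp1 : ∑ ω, p ω = 1) (V : ι → Ω → A) (s : Finset ι) :
    Hent p (fun ω => fun i : ↥s => V i ω) ≤ ∑ i ∈ s, Hent p (V i) := by
  induction s using Finset.cons_induction_on with
  | empty =>
    have e : Hent p (fun ω => fun i : ↥(∅ : Finset ι) => V i ω)
        = Hent p (fun _ : Ω => ()) :=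
      Hent_congr p _ _ (fun _ => ())
        (fun _ => fun i => absurd i.2 (Finset.notMem_empty _))
        (fun ω => rfl)
        (fun ω => funext fun i => absurd i.2 (Finset.notMem_empty _))
    rw [e, Hent_const_unit p hp1]
    simp
  | cons aa t ha ih =>
    have e : Hent p (fun ω => fun i : ↥(Finset.cons aa t ha) => V i ω)
        = Hent p (fun ω => (V aa ω, fun i : ↥t => V i ω)) := by
      refine Hent_congr p _ _
        (fun g => (g ⟨aa, Finset.mem_cons_self aa t⟩,
          fun i => g ⟨i.1, Finset.mem_cons_of_mem i.2⟩))
        (fun v => fun i => if h : i.1 = aa then v.1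
          else v.2 ⟨i.1, (Finset.mem_cons.mp i.2).resolve_left h⟩)
        (fun ω => rfl) (fun ω => funext fun i => ?_)
      by_cases h : i.1 = aa
      · simp only [h, dif_pos]
      · simp only [h, dif_neg, not_false_iff]
    rw [e, Finset.sum_cons]
    calc Hent p (fun ω => (V aa ω, fun i : ↥t => V i ω))
        ≤ Hent p (V aa) + Hent p (fun ω => fun i : ↥t => V i ω) :=
          Hent_pair_le_add p hp0 hp1 _ _
      _ ≤ Hent p (V aa) + ∑ i ∈ t, Hent p (V i) := by linarith [ih]
end IT
section Aux
variable {ι YT : Type*} [DecidableEq ι]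

/-- Restriction of a tuple indexed by `F` to a subset `G`. -/
def resF {F G : Finset ι} (h : G ⊆ F) (v : ↥F → YT) : ↥G → YT :=
  fun n => v ⟨n.1, h n.2⟩

open scoped Classical in
/-- Reassemble a tuple on `F` from its restrictions to `F \ S` and `S`. -/
noncomputable def unsplitF {F S : Finset ι} (hS : S ⊆ F)
    (r : ↥(F \ S) → YT) (s : ↥S → YT) : ↥F → YT :=
  fun n => if h : n.1 ∈ S then s ⟨n.1, h⟩ else r ⟨n.1, Finset.mem_sdiff.mpr ⟨n.2, h⟩⟩

lemma unsplitF_eq {F S : Finset ι} (hS : S ⊆ F) (v : ↥F → YT) :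
    unsplitF hS (resF Finset.sdiff_subset v) (resF hS v) = v := by
  funext n
  unfold unsplitF resF
  split <;> rfl

end Aux

set_option maxHeartbeats 1600000 in
/-- Cut-set converse bound for classical erasure-prone storage with shared-randomness
assistance, `CS-SRA(N, K, N_B, K_B)`: with a uniform message `Y₀` of entropy `κλ₀ log q`,
storage nodes `Y₁,…,Y_N` of entropy at most `κ log q` each, SR nodes `B₁,…,B_{N_B}` of
entropy at most `κ λ_B log q` each, message independent of the shared randomness,
decodability `H(Y₀ ∣ Y_𝒦, B_{𝒦_B}) = 0` for all `|𝒦| = K`, `|𝒦_B| = K_B` and security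
`I(Y₀; Y_{𝒦ᶜ}, B_{𝒦_Bᶜ}) = 0`, it holds that
`λ₀ ≤ max (2K − N) 0 + λ_B · max (2K_B − N_B) 0`. -/
theorem cssra_cutset_bound
    {Ω M YT BT : Type*} [Fintype Ω] [Fintype M] [Fintype YT] [Fintype BT]
    (N K NB KB : ℕ) (hK : K ≤ N) (hKB : KB ≤ NB)
    (p : Ω → ℝ) (hp0 : ∀ ω, 0 ≤ p ω) (hp1 : ∑ ω, p ω = 1)
    (Y0 : Ω → M) (Y : Fin N → Ω → YT) (B : Fin NB → Ω → BT)
    (q κ lam0 lamB : ℝ) (hq : 1 < q) (hκ : 0 < κ) (hlam0 : 0 ≤ lam0) (hlamB : 0 ≤ lamB)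
    (hunif : ∀ y : M, pmfOf p Y0 y = 1 / (Fintype.card M : ℝ))
    (hH0 : Hent p Y0 = κ * lam0 * Real.log q)
    (hHY : ∀ n : Fin N, Hent p (Y n) ≤ κ * Real.log q)
    (hHB : ∀ i : Fin NB, Hent p (B i) ≤ κ * lamB * Real.log q)
    (hindep : ∀ (y : M) (b : Fin NB → BT),
      pmfOf p (fun ω => (Y0 ω, fun i => B i ω)) (y, b)
        = pmfOf p Y0 y * pmfOf p (fun ω => fun i => B i ω) b)
    (hdec : ∀ (𝒦 : Finset (Fin N)) (𝒦B : Finset (Fin NB)), 𝒦.card = K → 𝒦B.card = KB →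
      condH p Y0 (fun ω => ((fun n : ↥𝒦 => Y n ω), (fun i : ↥𝒦B => B i ω))) = 0)
    (hsec : ∀ (𝒦 : Finset (Fin N)) (𝒦B : Finset (Fin NB)), 𝒦.card = K → 𝒦B.card = KB →
      MI p Y0 (fun ω => ((fun n : ↥(𝒦ᶜ) => Y n ω), (fun i : ↥(𝒦Bᶜ) => B i ω))) = 0) :
    lam0 ≤ max ((2 * K : ℝ) - N) 0 + lamB * max ((2 * KB : ℝ) - NB) 0 := by
  classical
  -- construct the index sets
  obtain ⟨S, -, hScard⟩ := Finset.exists_subset_card_eq (s := (Finset.univ : Finset (Fin N)))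
    (n := min K (N - K)) (by simp only [Finset.card_univ, Fintype.card_fin]; omega)
  obtain ⟨K1, hS1, -, hK1card'⟩ := Finset.exists_subsuperset_card_eq (n := K - min K (N - K) + S.card)
    (Finset.subset_univ S) le_add_self
    (by simp only [Finset.card_univ, Fintype.card_fin, hScard]; omega)
  have hK1card : K1.card = K := by rw [hK1card', hScard]; omega
  obtain ⟨K2, hK2sub, hK2card⟩ := Finset.exists_subset_card_eq (s := Sᶜ) (n := K)
    (by rw [Finset.card_compl, hScard]; simp only [Fintype.card_fin]; omega)
  have hSV : S ⊆ K2ᶜ := fun x hx =>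
    Finset.mem_compl.mpr fun hk => Finset.mem_compl.mp (hK2sub hk) hx
  obtain ⟨SB, -, hSBcard⟩ := Finset.exists_subset_card_eq (s := (Finset.univ : Finset (Fin NB)))
    (n := min KB (NB - KB)) (by simp only [Finset.card_univ, Fintype.card_fin]; omega)
  obtain ⟨KB1, hSB1, -, hKB1card'⟩ := Finset.exists_subsuperset_card_eq (n := KB - min KB (NB - KB) + SB.card)
    (Finset.subset_univ SB) le_add_self
    (by simp only [Finset.card_univ, Fintype.card_fin, hSBcard]; omega)
  have hKB1card : KB1.card = KB := by rw [hKB1card', hSBcard]; omega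
  obtain ⟨KB2, hKB2sub, hKB2card⟩ := Finset.exists_subset_card_eq (s := SBᶜ) (n := KB)
    (by rw [Finset.card_compl, hSBcard]; simp only [Fintype.card_fin]; omega)
  have hSBV : SB ⊆ KB2ᶜ := fun x hx =>
    Finset.mem_compl.mpr fun hk => Finset.mem_compl.mp (hKB2sub hk) hx
  -- the random variables
  set W1 : Ω → (↥K1 → YT) × (↥KB1 → BT) :=
    fun ω => (fun n => Y n ω, fun i => B i ω) with hW1
  set V2 : Ω → (↥(K2ᶜ) → YT) × (↥(KB2ᶜ) → BT) :=
    fun ω => (fun n => Y n ω, fun i => B i ω) with hV2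
  set Sv : Ω → (↥S → YT) × (↥SB → BT) :=
    fun ω => (fun n => Y n ω, fun i => B i ω) with hSv
  set RY : Ω → (↥(K1 \ S) → YT) := fun ω => fun n => Y n ω with hRY
  set RB : Ω → (↥(KB1 \ SB) → BT) := fun ω => fun i => B i ω with hRB
  set R : Ω → (↥(K1 \ S) → YT) × (↥(KB1 \ SB) → BT) :=
    fun ω => (RY ω, RB ω) with hR
  -- hypotheses instantiated
  have hdecW : condH p Y0 W1 = 0 := hdec K1 KB1 hK1card hKB1card
  have hsecV : MI p Y0 V2 = 0 := hsec K2 KB2 hK2card hKB2card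
  simp only [condH] at hdecW
  simp only [MI] at hsecV
  -- entropy identities via relabelling
  have E1 : Hent p W1 = Hent p (fun ω => (R ω, Sv ω)) :=
    Hent_congr p W1 (fun ω => (R ω, Sv ω))
      (fun w => ((resF Finset.sdiff_subset w.1, resF Finset.sdiff_subset w.2),
                 (resF hS1 w.1, resF hSB1 w.2)))
      (fun v => (unsplitF hS1 v.1.1 v.2.1, unsplitF hSB1 v.1.2 v.2.2))
      (fun ω => rfl)
      (fun ω => by
        show W1 ω = (unsplitF hS1 (resF Finset.sdiff_subset (W1 ω).1) (resF hS1 (W1 ω).1),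
          unsplitF hSB1 (resF Finset.sdiff_subset (W1 ω).2) (resF hSB1 (W1 ω).2))
        rw [unsplitF_eq hS1, unsplitF_eq hSB1])
  have E2 : Hent p (fun ω => (Y0 ω, W1 ω)) = Hent p (fun ω => (Y0 ω, R ω, Sv ω)) :=
    Hent_congr p _ _
      (fun w => (w.1, ((resF Finset.sdiff_subset w.2.1, resF Finset.sdiff_subset w.2.2),
                 (resF hS1 w.2.1, resF hSB1 w.2.2))))
      (fun v => (v.1, (unsplitF hS1 v.2.1.1 v.2.2.1, unsplitF hSB1 v.2.1.2 v.2.2.2)))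
      (fun ω => rfl)
      (fun ω => by
        show (Y0 ω, W1 ω) = (Y0 ω,
          (unsplitF hS1 (resF Finset.sdiff_subset (W1 ω).1) (resF hS1 (W1 ω).1),
           unsplitF hSB1 (resF Finset.sdiff_subset (W1 ω).2) (resF hSB1 (W1 ω).2)))
        rw [unsplitF_eq hS1, unsplitF_eq hSB1])
  have E3 : Hent p (fun ω => (V2 ω, Sv ω)) = Hent p V2 :=
    Hent_pair_comp p
      (fun v : (↥(K2ᶜ) → YT) × (↥(KB2ᶜ) → BT) => (resF hSV v.1, resF hSBV v.2)) V2
  have E4 : Hent p (fun ω => (V2 ω, Y0 ω, Sv ω)) = Hent p (fun ω => (Y0 ω, V2 ω)) :=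
    Hent_congr p _ _
      (fun v => (v.2.1, v.1))
      (fun w => (w.2, (w.1, (resF hSV w.2.1, resF hSBV w.2.2))))
      (fun ω => rfl) (fun ω => rfl)
  -- submodularity instances
  have c1 := CMI_nonneg p hp0 hp1 Y0 R Sv
  simp only [CMI] at c1
  have c2 := CMI_nonneg p hp0 hp1 V2 Y0 Sv
  simp only [CMI] at c2
  -- monotonicity and subadditivity
  have mono1 : Hent p (fun ω => (Y0 ω, Sv ω)) ≤ Hent p (fun ω => (Y0 ω, R ω, Sv ω)) :=
    Hent_comp_le p hp0 hp1 (fun v => (v.1, v.2.2)) (fun ω => (Y0 ω, R ω, Sv ω))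
  have sub1 : Hent p (fun ω => (R ω, Sv ω)) ≤ Hent p R + Hent p Sv :=
    Hent_pair_le_add p hp0 hp1 R Sv
  -- main entropy inequality : H(Y0) ≤ H(R)
  have hmain : Hent p Y0 ≤ Hent p R := by linarith
  -- bound H(R)
  have hRsplit : Hent p R ≤ Hent p RY + Hent p RB := Hent_pair_le_add p hp0 hp1 RY RB
  have hRYle : Hent p RY ≤ ((K1 \ S).card : ℝ) * (κ * Real.log q) := by
    calc Hent p RY ≤ ∑ n ∈ K1 \ S, Hent p (Y n) := by
          have h := Hent_tuple_le p hp0 hp1 Y (K1 \ S)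
          convert h using 2
      _ ≤ ((K1 \ S).card : ℝ) * (κ * Real.log q) := by
          have := Finset.sum_le_card_nsmul (K1 \ S) (fun n => Hent p (Y n))
            (κ * Real.log q) (fun n _ => hHY n)
          simpa [nsmul_eq_mul] using this
  have hRBle : Hent p RB ≤ ((KB1 \ SB).card : ℝ) * (κ * lamB * Real.log q) := by
    calc Hent p RB ≤ ∑ i ∈ KB1 \ SB, Hent p (B i) := by
          have h := Hent_tuple_le p hp0 hp1 B (KB1 \ SB)
          convert h using 2
      _ ≤ ((KB1 \ SB).card : ℝ) * (κ * lamB * Real.log q) := by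
          have := Finset.sum_le_card_nsmul (KB1 \ SB) (fun i => Hent p (B i))
            (κ * lamB * Real.log q) (fun i _ => hHB i)
          simpa [nsmul_eq_mul] using this
  -- cardinalities
  have hcY : ((K1 \ S).card : ℝ) = max ((2 * K : ℝ) - N) 0 := by
    have h1 : (K1 \ S).card = K - min K (N - K) := by
      rw [Finset.card_sdiff_of_subset hS1, hK1card, hScard]
    rcases le_or_gt (2 * K) N with h | h
    · have h2 : (K1 \ S).card = 0 := by omega
      have hle : (2 * K : ℝ) - N ≤ 0 := by
        have h' := (Nat.cast_le (α := ℝ)).mpr h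
        push_cast at h'
        linarith
      rw [h2, Nat.cast_zero, max_eq_right hle]
    · have h2 : (K1 \ S).card = 2 * K - N := by omega
      have hge : (0:ℝ) ≤ (2 * K : ℝ) - N := by
        have h' := (Nat.cast_le (α := ℝ)).mpr h.le
        push_cast at h'
        linarith
      rw [h2, max_eq_left hge]
      push_cast [Nat.cast_sub (by omega : N ≤ 2 * K)]
      ring
  have hcB : ((KB1 \ SB).card : ℝ) = max ((2 * KB : ℝ) - NB) 0 := by
    have h1 : (KB1 \ SB).card = KB - min KB (NB - KB) := by
      rw [Finset.card_sdiff_of_subset hSB1, hKB1card, hSBcard]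
    rcases le_or_gt (2 * KB) NB with h | h
    · have h2 : (KB1 \ SB).card = 0 := by omega
      have hle : (2 * KB : ℝ) - NB ≤ 0 := by
        have h' := (Nat.cast_le (α := ℝ)).mpr h
        push_cast at h'
        linarith
      rw [h2, Nat.cast_zero, max_eq_right hle]
    · have h2 : (KB1 \ SB).card = 2 * KB - NB := by omega
      have hge : (0:ℝ) ≤ (2 * KB : ℝ) - NB := by
        have h' := (Nat.cast_le (α := ℝ)).mpr h.le
        push_cast at h'
        linarith
      rw [h2, max_eq_left hge]
      push_cast [Nat.cast_sub (by omega : NB ≤ 2 * KB)]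
      ring
  -- put everything together
  have hL : 0 < Real.log q := Real.log_pos hq
  have final : κ * lam0 * Real.log q
      ≤ max ((2 * K : ℝ) - N) 0 * (κ * Real.log q)
        + max ((2 * KB : ℝ) - NB) 0 * (κ * lamB * Real.log q) := by
    rw [← hcY, ← hcB, ← hH0]
    linarith
  rw [← mul_le_mul_iff_right₀ (show (0:ℝ) < κ * Real.log q by positivity)]
  calc (κ * Real.log q) * lam0 = κ * lam0 * Real.log q := by ring
    _ ≤ max ((2 * K : ℝ) - N) 0 * (κ * Real.log q)
        + max ((2 * KB : ℝ) - NB) 0 * (κ * lamB * Real.log q) := final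
    _ = (κ * Real.log q) * (max ((2 * K : ℝ) - N) 0 + lamB * max ((2 * KB : ℝ) - NB) 0) := by
        ring
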